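/- arXiv:0708.2899 — 4 statements merged into one kernel-verified Lean document; each statement's English description precedes it below -/
import Mathlib

section
/- For y in the open unit ball 𝔹 of a complex Hilbert space H, the Fréchet derivative of the Möbius transformation M_y at a point x ∈ 𝔹 is given, for every h ∈ H, by M_y'(x)h = (1 − ⟨x,y⟩)⁻² [ −(1 − ⟨x,y⟩)(P_y + sQ_y)h + ⟨h,y⟩(y − P_y x − sQ_y x) ]. -/
open Metric

variable {H : Type*} [NormedAddCommGroup H] [InnerProductSpace ℂ H]

/-- The inner product in the convention of the paper: `⟨x, y⟩` is linear in the
first argument and conjugate-linear in the second. -/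
noncomputable def ip (x y : H) : ℂ := inner ℂ y x

/-- The orthogonal projection `P_y` of `H` onto the span of `y`:
`P_y x = (⟨x, y⟩ / ‖y‖²) y` (and `P_0 = 0`, which this formula also yields). -/
noncomputable def Pproj (y x : H) : H := (ip x y / (‖y‖ ^ 2 : ℂ)) • y

/-- `Q_y = I - P_y`. -/
noncomputable def Qproj (y x : H) : H := x - Pproj y x

/-- The Möbius transformation of the unit ball:
`M_y x = (y - P_y x - s Q_y x) / (1 - ⟨x, y⟩)`, where `s = √(1 - ‖y‖²)`. -/
noncomputable def Mob (y x : H) : H :=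
  (1 - ip x y)⁻¹ • (y - Pproj y x - (Real.sqrt (1 - ‖y‖ ^ 2) : ℂ) • Qproj y x)

/-- the Fréchet derivative of `M_y` at a point `x` of the ball is
`h ↦ (1 - ⟨x,y⟩)⁻² [ -(1 - ⟨x,y⟩)(P_y + s Q_y) h + ⟨h,y⟩ (y - P_y x - s Q_y x) ]`. -/
theorem mob_fderiv (y x : H) (hy : ‖y‖ < 1) (hx : ‖x‖ < 1) :
    DifferentiableAt ℂ (Mob y) x ∧
      ∀ h : H, fderiv ℂ (Mob y) x h =
        ((1 - ip x y) ^ 2)⁻¹ •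
          (-((1 - ip x y) •
              (Pproj y h + (Real.sqrt (1 - ‖y‖ ^ 2) : ℂ) • Qproj y h)) +
            ip h y • (y - Pproj y x - (Real.sqrt (1 - ‖y‖ ^ 2) : ℂ) • Qproj y x)) := by
  classical
  set c : ℂ := (Real.sqrt (1 - ‖y‖ ^ 2) : ℂ) with hc
  set φ : H →L[ℂ] ℂ := innerSL ℂ y with hφ
  set P : H →L[ℂ] H := ((‖y‖ ^ 2 : ℂ)⁻¹ • (innerSL ℂ y)).smulRight y with hP
  set L : H →L[ℂ] H := c • ContinuousLinearMap.id ℂ H + (1 - c) • P with hL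
  have hPapp : ∀ z : H, P z = ((‖y‖ ^ 2 : ℂ)⁻¹ * (inner ℂ y z : ℂ)) • y := by
    intro z; simp [hP]
  have hLapp : ∀ z : H, L z = Pproj y z + c • Qproj y z := by
    intro z
    simp only [hL, ContinuousLinearMap.add_apply, ContinuousLinearMap.smul_apply,
      ContinuousLinearMap.id_apply, hPapp, Pproj, Qproj, ip]
    match_scalars <;> ring
  have hfun : Mob y = fun z : H => (1 - φ z)⁻¹ • (y - L z) := by
    funext z
    rw [Mob, hLapp, sub_add_eq_sub_sub]
    rfl
  have fne : (1 - φ x) ≠ 0 := by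
    have h1 : ‖(φ x : ℂ)‖ < 1 := by
      calc ‖(φ x : ℂ)‖ ≤ ‖y‖ * ‖x‖ := norm_inner_le_norm y x
        _ < 1 := by nlinarith [norm_nonneg x, norm_nonneg y]
    intro h
    have h2 : (φ x : ℂ) = 1 := by linear_combination -h
    rw [h2] at h1; simp at h1
  have hsub : HasFDerivAt (fun z : H => 1 - φ z) ((0 : H →L[ℂ] ℂ) - φ) x :=
    (hasFDerivAt_const (1 : ℂ) x).sub φ.hasFDerivAt
  have hf : HasFDerivAt (fun z : H => (1 - φ z)⁻¹)
      (((1 : ℂ →L[ℂ] ℂ).smulRight (-((1 - φ x) ^ 2)⁻¹)).comp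
        ((0 : H →L[ℂ] ℂ) - φ)) x :=
    (hasFDerivAt_inv fne).comp x hsub
  have hg : HasFDerivAt (fun z : H => y - L z) ((0 : H →L[ℂ] H) - L) x :=
    (hasFDerivAt_const y x).sub L.hasFDerivAt
  have hM : HasFDerivAt (Mob y)
      ((1 - φ x)⁻¹ • ((0 : H →L[ℂ] H) - L) +
        (((1 : ℂ →L[ℂ] ℂ).smulRight (-((1 - φ x) ^ 2)⁻¹)).comp
          ((0 : H →L[ℂ] ℂ) - φ)).smulRight (y - L x)) x := by
    rw [hfun]; exact hf.smul hg
  refine ⟨hM.differentiableAt, fun h => ?_⟩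
  rw [hM.fderiv]
  simp only [ContinuousLinearMap.add_apply, ContinuousLinearMap.smul_apply,
    ContinuousLinearMap.sub_apply, ContinuousLinearMap.zero_apply,
    ContinuousLinearMap.smulRight_apply, ContinuousLinearMap.comp_apply,
    ContinuousLinearMap.one_apply, hLapp]
  have hiph : ip h y = φ h := rfl
  have hipx : ip x y = φ x := rfl
  rw [hiph, hipx]
  simp only [smul_eq_mul]
  match_scalars <;> field_simp <;> ring
end

section
/- For y in the open unit ball 𝔹 of a complex Hilbert space H, the Fréchet derivative of the Möbius transformation M_y at the point y satisfies M_y'(y)h = −(1 − ‖y‖²)⁻¹ (P_y + sQ_y)h for every h ∈ H. -/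
open Metric

variable {H : Type*} [NormedAddCommGroup H] [InnerProductSpace ℂ H]

/-- the Fréchet derivative of `M_y` at the point `y` is
`h ↦ -(1 - ‖y‖²)⁻¹ (P_y + s Q_y) h`, where `s = √(1 - ‖y‖²)`. -/
theorem mob_fderiv_at_center (y : H) (hy : ‖y‖ < 1) :
    DifferentiableAt ℂ (Mob y) y ∧
      ∀ h : H, fderiv ℂ (Mob y) y h =
        -(((1 : ℂ) - (‖y‖ ^ 2 : ℝ))⁻¹ •
          (Pproj y h + (Real.sqrt (1 - ‖y‖ ^ 2) : ℂ) • Qproj y h)) := by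
  classical
  set sc : ℂ := (Real.sqrt (1 - ‖y‖ ^ 2) : ℂ) with hsc
  set P : H →L[ℂ] H := ((‖y‖ ^ 2 : ℂ))⁻¹ • ((innerSL ℂ y).smulRight y) with hPdef
  set A : H →L[ℂ] H := P + sc • (ContinuousLinearMap.id ℂ H - P) with hAdef
  have hP : ∀ x, P x = Pproj y x := by
    intro x
    simp [hPdef, Pproj, ip, div_eq_mul_inv, mul_comm, smul_smul]
  have hA : ∀ x, A x = Pproj y x + sc • Qproj y x := by
    intro x
    simp [hAdef, Qproj, hP]
  have hMob : Mob y = fun x => (1 - (innerSL ℂ y) x)⁻¹ • (y - A x) := by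
    funext x
    simp only [Mob, hA, ip, coe_innerSL_apply, sub_sub, innerSL_apply_apply, ← hsc]
  have hyy : (inner ℂ y y : ℂ) = (‖y‖ ^ 2 : ℝ) := by
    rw [inner_self_eq_norm_sq_to_K]; norm_cast
  have hne : (1 : ℂ) - (innerSL ℂ y) y ≠ 0 := by
    simp only [innerSL_apply_apply, hyy]
    have h1 : (‖y‖ ^ 2 : ℝ) < 1 := by nlinarith [norm_nonneg y]
    intro hc
    have : ((‖y‖ ^ 2 : ℝ) : ℂ) = 1 := by linear_combination -hc
    have : (‖y‖ ^ 2 : ℝ) = 1 := by exact_mod_cast this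
    linarith
  have hAy : A y = y := by
    have hPy : P y = y ∨ y = 0 := by
      by_cases h0 : y = 0
      · exact Or.inr h0
      · left
        have hn : (‖y‖ ^ 2 : ℂ) ≠ 0 := by
          simp [pow_eq_zero_iff, norm_eq_zero, h0]
        simp only [hPdef, ContinuousLinearMap.smul_apply,
          ContinuousLinearMap.smulRight_apply, innerSL_apply_apply, hyy, smul_smul]
        rw [show ((‖y‖ ^ 2 : ℝ) : ℂ) = (‖y‖ : ℂ) ^ 2 by push_cast; ring,
          inv_mul_cancel₀ hn, one_smul]
    rcases hPy with h | h
    · simp [hAdef, h]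
    · simp [hAdef, h]
  have h1 : HasFDerivAt (fun x : H => (1 : ℂ) - (innerSL ℂ y) x)
      (0 - innerSL ℂ y) y :=
    (hasFDerivAt_const (1 : ℂ) y).sub (innerSL ℂ y).hasFDerivAt
  have h2 := (hasFDerivAt_inv' (𝕜 := ℂ) hne).comp y h1
  have h3 : HasFDerivAt (fun x : H => y - A x) ((0 : H →L[ℂ] H) - A) y :=
    (hasFDerivAt_const y y).sub A.hasFDerivAt
  have h4 := h2.smul h3
  simp only [Function.comp_def] at h4
  rw [hMob]
  refine ⟨h4.differentiableAt, ?_⟩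
  intro h
  rw [show (fun x => (1 - (innerSL ℂ y) x)⁻¹ • (y - A x)) = ((fun x => (1 - (innerSL ℂ y) x)⁻¹) • fun x => y - A x) from rfl, h4.fderiv]
  simp only [ContinuousLinearMap.add_apply, ContinuousLinearMap.smul_apply,
    ContinuousLinearMap.smulRight_apply, hAy, sub_self, smul_zero, add_zero,
    ContinuousLinearMap.sub_apply, ContinuousLinearMap.zero_apply, zero_sub,
    innerSL_apply_apply, hyy, hA, smul_neg]
  simp [hA]
end

section
/- Let H be a complex Hilbert space with open unit ball 𝔹, let τ ∈ H with ‖τ‖ = 1, let y ∈ 𝔹, and let U be a unitary operator on H with Uτ = M_y(τ). Set m = M_y ∘ U, so that m is an automorphism of 𝔹 with m(τ) = τ, and let L = (d/dz)⟨m(zτ), τ⟩ at z = 1. Then L > 0 and for all z ∈ Δ: |1 − ⟨m(zτ), τ⟩|² / (1 − ‖m(zτ)‖²) = L · |1 − z|² / (1 − |z|²). -/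
open Metric

variable {H : Type*} [NormedAddCommGroup H] [InnerProductSpace ℂ H]

noncomputable def NumV (y x : H) : H :=
  y - Pproj y x - (Real.sqrt (1 - ‖y‖ ^ 2) : ℂ) • Qproj y x

lemma mob_eq (y x : H) : Mob y x = (1 - ip x y)⁻¹ • NumV y x := rfl

lemma mob_zero (x : H) : Mob (0 : H) x = -x := by
  simp [Mob, Pproj, Qproj, ip]

lemma ip_smul_left (c : ℂ) (u v : H) : ip (c • u) v = c * ip u v := by
  simp [ip, inner_smul_right]
lemma ip_smul_right (c : ℂ) (u v : H) : ip u (c • v) = starRingEnd ℂ c * ip u v := by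
  simp [ip, inner_smul_left]; ring

lemma num_inner (y x b : H) (hy : ‖y‖ < 1) (hy0 : y ≠ 0) :
    ip (NumV y x) (NumV y b) =
      (‖y‖:ℂ)^2 - ip x y - starRingEnd ℂ (ip b y) + ip x y * starRingEnd ℂ (ip b y) / (‖y‖:ℂ)^2
      + (1 - (‖y‖:ℂ)^2) * (ip x b - ip x y * starRingEnd ℂ (ip b y) / (‖y‖:ℂ)^2) := by
  have hr : ((‖y‖ : ℂ))^2 ≠ 0 :=
    pow_ne_zero 2 (by exact_mod_cast norm_ne_zero_iff.mpr hy0)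
  have hn : (‖y‖ : ℂ) ≠ 0 := by exact_mod_cast norm_ne_zero_iff.mpr hy0
  have hs : ((Real.sqrt (1 - ‖y‖^2) : ℝ) : ℂ)^2 = 1 - (‖y‖ : ℂ)^2 := by
    rw [← Complex.ofReal_pow, Real.sq_sqrt (by nlinarith [norm_nonneg y])]
    push_cast; ring
  set s : ℂ := ((Real.sqrt (1 - ‖y‖^2) : ℝ) : ℂ) with hsdef
  have hsc : starRingEnd ℂ s = s := Complex.conj_ofReal _
  have e1 : (inner ℂ x y : ℂ) = starRingEnd ℂ (inner ℂ y x) := (inner_conj_symm _ _).symm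
  have e2 : (inner ℂ x b : ℂ) = starRingEnd ℂ (inner ℂ b x) := (inner_conj_symm _ _).symm
  have e3 : (inner ℂ b y : ℂ) = starRingEnd ℂ (inner ℂ y b) := (inner_conj_symm _ _).symm
  simp only [NumV, Pproj, Qproj, ip, inner_sub_left, inner_sub_right,
    inner_smul_left, inner_smul_right, inner_self_eq_norm_sq_to_K, map_sub,
    map_one, map_inv₀, map_div₀, Complex.conj_conj, Complex.conj_ofReal,
    RCLike.conj_ofReal, map_pow, hsc, e1, e2, e3]
  set α : ℂ := inner ℂ y x
  set β : ℂ := inner ℂ y b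
  set γ : ℂ := inner ℂ b x
  field_simp
  linear_combination hs * ((‖y‖:ℂ)^2 * ((‖y‖:ℂ)^2 * γ - α * starRingEnd ℂ β))

lemma key (y x b : H) (hy : ‖y‖ < 1)
    (hx : (1:ℂ) - ip x y ≠ 0) (hb : (1:ℂ) - ip b y ≠ 0) :
    (1 - ip x y) * (1 - starRingEnd ℂ (ip b y)) * (1 - ip (Mob y x) (Mob y b)) =
      (1 - (‖y‖^2 : ℂ)) * (1 - ip x b) := by
  rcases eq_or_ne y 0 with rfl | hy0
  · simp [mob_zero, ip, inner_neg_neg]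
  · have hr : ((‖y‖ : ℂ))^2 ≠ 0 :=
      pow_ne_zero 2 (by exact_mod_cast norm_ne_zero_iff.mpr hy0)
    have hn : (‖y‖ : ℂ) ≠ 0 := by exact_mod_cast norm_ne_zero_iff.mpr hy0
    have hb' : (1:ℂ) - starRingEnd ℂ (ip b y) ≠ 0 := by
      intro h; apply hb
      have := congrArg (starRingEnd ℂ) h
      simpa using this
    rw [mob_eq, mob_eq, ip_smul_left, ip_smul_right, map_inv₀, map_sub, map_one,
      num_inner y x b hy hy0]
    push_cast
    field_simp
    ring

lemma ip_mob_y (y x : H) (hy0 : y ≠ 0) :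
    ip (Mob y x) y = (1 - ip x y)⁻¹ * ((‖y‖:ℂ)^2 - ip x y) := by
  have hr : ((‖y‖ : ℂ))^2 ≠ 0 :=
    pow_ne_zero 2 (by exact_mod_cast norm_ne_zero_iff.mpr hy0)
  have hn : (‖y‖ : ℂ) ≠ 0 := by exact_mod_cast norm_ne_zero_iff.mpr hy0
  simp only [Mob, Pproj, Qproj, ip, inner_sub_right, inner_smul_right,
    inner_self_eq_norm_sq_to_K]
  field_simp
  rw [RCLike.ofReal_eq_complex_ofReal]
  ring

lemma mob_invol (y x : H) (hy : ‖y‖ < 1) (hx : (1:ℂ) - ip x y ≠ 0) :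
    Mob y (Mob y x) = x := by
  rcases eq_or_ne y 0 with rfl | hy0
  · simp [mob_zero]
  · have hr : ((‖y‖ : ℂ))^2 ≠ 0 :=
      pow_ne_zero 2 (by exact_mod_cast norm_ne_zero_iff.mpr hy0)
    have hn : (‖y‖ : ℂ) ≠ 0 := by exact_mod_cast norm_ne_zero_iff.mpr hy0
    have hs : ((Real.sqrt (1 - ‖y‖^2) : ℝ) : ℂ)^2 = 1 - (‖y‖ : ℂ)^2 := by
      rw [← Complex.ofReal_pow, Real.sq_sqrt (by nlinarith [norm_nonneg y])]
      push_cast; ring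
    have hc : (1:ℂ) - (‖y‖:ℂ)^2 ≠ 0 := by
      have : ((1 - ‖y‖^2 : ℝ) : ℂ) ≠ 0 := by
        exact_mod_cast ne_of_gt (by nlinarith [norm_nonneg y])
      simpa using this
    have hx' : (1:ℂ) - inner ℂ y x ≠ 0 := hx
    have h1 : ip (Mob y x) y = (1 - ip x y)⁻¹ * ((‖y‖:ℂ)^2 - ip x y) :=
      ip_mob_y y x hy0
    have h1' : (1:ℂ) - ip (Mob y x) y = (1 - ip x y)⁻¹ * (1 - (‖y‖:ℂ)^2) := by
      rw [h1]; field_simp; ring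
    have hD : (1:ℂ) - inner ℂ y x + ((inner ℂ y x : ℂ) * (‖y‖:ℂ)^2 - (‖y‖:ℂ)^2) ≠ 0 := by
      intro h; apply mul_ne_zero hx' hc; linear_combination h
    have hE : -((inner ℂ y x : ℂ) * (‖y‖:ℂ)^2) + (‖y‖:ℂ)^2 ≠ 0 := by
      intro h; apply mul_ne_zero hr hx'; linear_combination h
    conv_lhs => rw [Mob, h1', Pproj, Qproj, h1]
    simp only [Mob, Pproj, Qproj, ip, inner_sub_right, inner_smul_right,
      inner_self_eq_norm_sq_to_K]
    match_scalars
    · field_simp [hD, hE]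
      linear_combination hs * (-(‖y‖:ℂ)^2 * inner ℂ y x)
    · field_simp [hD, hE]
      linear_combination hs

lemma norm_key (y x : H) (hy : ‖y‖ < 1) (hx : (1:ℂ) - ip x y ≠ 0) :
    (1 - ‖Mob y x‖^2) * ‖1 - ip x y‖^2 = (1-‖y‖^2)*(1-‖x‖^2) := by
  have h := key y x x hy hx hx
  have h2 : ip (Mob y x) (Mob y x) = ((‖Mob y x‖^2 : ℝ) : ℂ) := by
    simp [ip, inner_self_eq_norm_sq_to_K]
  have h3 : ip x x = ((‖x‖^2 : ℝ) : ℂ) := by simp [ip, inner_self_eq_norm_sq_to_K]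
  rw [h2, h3] at h
  have h4 : (1 - ip x y) * (1 - starRingEnd ℂ (ip x y)) =
      ((‖1 - ip x y‖^2 : ℝ) : ℂ) := by
    rw [Complex.sq_norm]
    rw [← Complex.mul_conj]
    simp
  rw [h4] at h
  have := h
  apply Complex.ofReal_inj.mp
  push_cast
  push_cast at this
  linear_combination this

lemma ip_smul_left' (c : ℂ) (u v : H) : ip (c • u) v = c * ip u v := by
  simp [ip, inner_smul_right]

lemma one_sub_ne (c : ℂ) (h : ‖c‖ < 1) : (1:ℂ) - c ≠ 0 := by
  intro h0
  have : c = 1 := by linear_combination -h0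
  simp [this] at h

/-- with `m = M_y ∘ U` (where `U` is a unitary with `U τ = M_y τ`, so
that `m` is an automorphism of the ball fixing `τ`) and
`L = (d/dz)⟨m(zτ), τ⟩ |_{z=1}`, one has `L > 0` (in particular `L` is real) and
`|1 - ⟨m(zτ), τ⟩|² / (1 - ‖m(zτ)‖²) = L · |1 - z|² / (1 - |z|²)` for all `z ∈ Δ`. -/
theorem koranyi_quotient_identity (y τ : H) (hy : ‖y‖ < 1) (hτ : ‖τ‖ = 1)
    (U : H ≃ₗᵢ[ℂ] H) (hU : U τ = Mob y τ) :
    0 < (deriv (fun z : ℂ => ip (Mob y (U (z • τ))) τ) 1).re ∧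
    (deriv (fun z : ℂ => ip (Mob y (U (z • τ))) τ) 1).im = 0 ∧
    ∀ z : ℂ, ‖z‖ < 1 →
      ‖1 - ip (Mob y (U (z • τ))) τ‖ ^ 2 / (1 - ‖Mob y (U (z • τ))‖ ^ 2) =
        (deriv (fun z : ℂ => ip (Mob y (U (z • τ))) τ) 1).re *
          (‖1 - z‖ ^ 2 / (1 - ‖z‖ ^ 2)) := by
  have hUz : ∀ z : ℂ, U (z • τ) = z • Mob y τ := by
    intro z; rw [map_smul, hU]
  simp only [hUz]
  set w : H := Mob y τ with hwdef
  -- basic facts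
  have hτy : (1:ℂ) - ip τ y ≠ 0 := by
    apply one_sub_ne
    calc ‖ip τ y‖ = ‖(inner ℂ y τ : ℂ)‖ := rfl
    _ ≤ ‖y‖ * ‖τ‖ := norm_inner_le_norm y τ
    _ < 1 := by rw [hτ]; simpa using hy
  have hinvol : Mob y w = τ := mob_invol y τ hy hτy
  have hyr : (0:ℝ) < 1 - ‖y‖^2 := by nlinarith [norm_nonneg y]
  have hw1 : ‖w‖ = 1 := by
    have h := norm_key y τ hy hτy
    rw [hτ] at h
    have habs : ‖1 - ip τ y‖ ≠ 0 := by
      rwa [ne_eq, norm_eq_zero]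
    have : 1 - ‖w‖^2 = 0 := by
      have h2 : (1 - ‖w‖^2) * ‖1 - ip τ y‖^2 = 0 := by rw [h]; ring
      rcases mul_eq_zero.mp h2 with h3 | h3
      · exact h3
      · exact absurd (pow_eq_zero_iff (by norm_num) |>.mp h3) habs
    nlinarith [norm_nonneg w]
  set a : ℂ := ip w y with hadef
  have ha1 : ‖a‖ < 1 := by
    calc ‖a‖ = ‖(inner ℂ y w : ℂ)‖ := rfl
    _ ≤ ‖y‖ * ‖w‖ := norm_inner_le_norm y w
    _ < 1 := by rw [hw1]; simpa using hy
  have ha : (1:ℂ) - a ≠ 0 := one_sub_ne a ha1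
  have hca : (1:ℂ) - starRingEnd ℂ a ≠ 0 := by
    intro h0; apply ha
    have := congrArg (starRingEnd ℂ) h0
    simpa using this
  -- main functional identity
  have hf : ∀ z : ℂ, (1:ℂ) - z * a ≠ 0 →
      (1 - z * a) * (1 - starRingEnd ℂ a) * (1 - ip (Mob y (z • w)) τ) =
        ((1 - ‖y‖^2 : ℝ) : ℂ) * (1 - z) := by
    intro z hz
    have hxz : (1:ℂ) - ip (z • w) y ≠ 0 := by
      rw [ip_smul_left']; exact hz
    have h := key y (z • w) w hy hxz (by rw [← hadef]; exact ha)
    rw [hinvol] at h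
    rw [ip_smul_left', ip_smul_left'] at h
    have hww : ip w w = 1 := by
      simp [ip, inner_self_eq_norm_sq_to_K, hw1]
    rw [hww] at h
    rw [← hadef] at h
    rw [h]; push_cast; ring
  -- the comparison function g
  set C : ℂ := ((1 - ‖y‖^2 : ℝ) : ℂ) / (1 - starRingEnd ℂ a) with hCdef
  set g : ℂ → ℂ := fun z => 1 - C * ((1 - z)/(1 - z * a)) with hgdef
  have hfg : ∀ z : ℂ, (1:ℂ) - z * a ≠ 0 → ip (Mob y (z • w)) τ = g z := by
    intro z hz
    have h := hf z hz
    have h2 : (1 - z * a) * (1 - starRingEnd ℂ a) * (1 - g z) =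
        ((1 - ‖y‖^2 : ℝ) : ℂ) * (1 - z) := by
      rw [hgdef]
      simp only
      rw [hCdef]
      field_simp
      push_cast
      ring
    have h3 := mul_left_cancel₀ (mul_ne_zero hz hca) (h.trans h2.symm)
    linear_combination -h3
  have h1a : (1:ℂ) - 1 * a ≠ 0 := by rwa [one_mul]
  have heq : (fun z : ℂ => ip (Mob y (z • w)) τ) =ᶠ[nhds 1] g := by
    have hcont : Continuous fun z : ℂ => 1 - z * a := by continuity
    have hopen : IsOpen {z : ℂ | 1 - z * a ≠ 0} :=
      isOpen_compl_singleton.preimage hcont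
    exact Filter.eventually_of_mem (hopen.mem_nhds h1a) (fun z hz => hfg z hz)
  have h1 : HasDerivAt (fun z : ℂ => 1 - z) (-1) 1 := (hasDerivAt_id (1:ℂ)).const_sub 1
  have h2 : HasDerivAt (fun z : ℂ => 1 - z * a) (-(1 * a)) 1 :=
    ((hasDerivAt_id (1:ℂ)).mul_const a).const_sub 1
  have h3 := h1.div h2 h1a
  have h4 := (h3.const_mul C).const_sub 1
  have habs1 : (0:ℝ) < ‖1 - a‖ := by
    rw [norm_pos_iff]; exact ha
  have habs2 : ((‖1-a‖^2 : ℝ) : ℂ) = (1-a) * (1 - starRingEnd ℂ a) := by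
    rw [Complex.sq_norm, ← Complex.mul_conj]
    simp
  set L : ℝ := (1 - ‖y‖^2) / ‖1-a‖^2 with hLdef
  have hL : deriv (fun z : ℂ => ip (Mob y (z • w)) τ) 1 = (L : ℂ) := by
    rw [heq.deriv_eq, (show HasDerivAt g _ 1 from h4).deriv, hLdef, Complex.ofReal_div, habs2, hCdef]
    field_simp
    ring
  have hLpos : 0 < L := div_pos hyr (pow_pos habs1 2)
  refine ⟨by rw [hL]; simpa using hLpos, by rw [hL]; simp, ?_⟩
  -- the quotient identity
  intro z hz1
  have hza : (1:ℂ) - z * a ≠ 0 := by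
    apply one_sub_ne
    rw [norm_mul]
    calc ‖z‖ * ‖a‖ ≤ 1 * ‖a‖ := by
          apply mul_le_mul_of_nonneg_right hz1.le (norm_nonneg a)
    _ < 1 := by simpa using ha1
  rw [hL]
  simp only [Complex.ofReal_re]
  have habza : (0:ℝ) < ‖1 - z * a‖ := by
    rw [norm_pos_iff]; exact hza
  have hden : (0:ℝ) < 1 - ‖z‖ ^ 2 := by
    nlinarith [norm_nonneg z]
  have hconjabs : ‖1 - starRingEnd ℂ a‖ = ‖1 - a‖ := by
    rw [show (1:ℂ) - starRingEnd ℂ a = starRingEnd ℂ (1 - a) by simp, Complex.norm_conj]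
  -- numerator identity
  have e1 : ‖1 - ip (Mob y (z • w)) τ‖ * (‖1 - z * a‖ * ‖1 - a‖) = (1 - ‖y‖^2) * ‖1 - z‖ := by
    have h5 := congrArg norm (hf z hza)
    rw [norm_mul, norm_mul, norm_mul, hconjabs, Complex.norm_real, Real.norm_eq_abs,
      abs_of_pos hyr] at h5
    linear_combination h5
  -- denominator identity
  have hxz' : (1:ℂ) - ip (z • w) y ≠ 0 := by rw [ip_smul_left', ← hadef]; exact hza
  have e2 : (1 - ‖Mob y (z • w)‖^2) * ‖1 - z * a‖^2 =
      (1 - ‖y‖^2) * (1 - ‖z‖ ^ 2) := by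
    have h6 := norm_key y (z • w) hy hxz'
    rw [ip_smul_left', ← hadef] at h6
    rw [norm_smul, hw1] at h6
    simpa using h6
  have hA : ‖1 - ip (Mob y (z • w)) τ‖ =
      (1 - ‖y‖^2) * ‖1 - z‖ / (‖1 - z * a‖ * ‖1 - a‖) := by
    rw [eq_div_iff (by positivity)]; exact e1
  have hB : 1 - ‖Mob y (z • w)‖^2 =
      (1 - ‖y‖^2) * (1 - ‖z‖ ^ 2) / ‖1 - z * a‖^2 := by
    rw [eq_div_iff (by positivity)]; exact e2
  rw [hA, hB]
  have hne1 : ‖1 - a‖ ≠ 0 := ne_of_gt habs1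
  have hne2 : ‖1 - z * a‖ ≠ 0 := ne_of_gt habza
  have hne3 : (1:ℝ) - ‖z‖ ^ 2 ≠ 0 := ne_of_gt hden
  rw [hLdef]
  field_simp [hyr.ne']
end

section
/- Let H be a complex Hilbert space with open unit ball 𝔹, let τ ∈ H with ‖τ‖ = 1, and let f : 𝔹 → H be holomorphic. If ⟨f(y), y − τ + ‖y‖²·τ − ⟨τ, y⟩·y⟩ = 0 for all y ∈ 𝔹, then f ≡ 0 on 𝔹. -/
open Metric

/-- Key lemma: if `F, G` are holomorphic on a disc around `0` and
`F z + conj z * G z = 0` on the disc, then `G 0 = 0`. -/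
lemma aux_conj_vanish {F G : ℂ → ℂ} {ε : ℝ} (hε : 0 < ε)
    (hF : DifferentiableOn ℂ F (ball 0 ε)) (hG : DifferentiableOn ℂ G (ball 0 ε))
    (h : ∀ z ∈ ball (0 : ℂ) ε, F z + (starRingEnd ℂ) z * G z = 0) :
    G 0 = 0 := by
  set r : ℝ := ε / 2 with hrdef
  have hr : 0 < r := by positivity
  have hrε : r < ε := by rw [hrdef]; linarith
  set Φ : ℂ → ℂ := fun z => z * F z + (r ^ 2 : ℂ) * G z with hΦ
  have hsub : closure (ball (0 : ℂ) r) ⊆ ball 0 ε := by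
    rw [closure_ball (0 : ℂ) hr.ne']
    exact closedBall_subset_ball hrε
  have hΦd : DiffContOnCl ℂ Φ (ball 0 r) := by
    apply DifferentiableOn.diffContOnCl
    exact (((differentiableOn_id).mul (hF.mono hsub)).add
      ((differentiableOn_const _).mul (hG.mono hsub)))
  have hint := hΦd.circleIntegral_sub_inv_smul (mem_ball_self hr)
  have hzero : (∮ (z : ℂ) in C(0, r), (z - 0)⁻¹ • Φ z) = 0 := by
    have heq : Set.EqOn (fun z : ℂ => (z - 0)⁻¹ • Φ z) (fun _ => (0 : ℂ))
        (sphere (0 : ℂ) r) := by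
      intro z hz
      have hnz : ‖z‖ = r := by simpa using hz
      have hz0 : z ≠ 0 := by
        intro h0; rw [h0] at hnz; simp at hnz; linarith
      have hzball : z ∈ ball (0 : ℂ) ε := by
        simp only [mem_ball, dist_zero_right]; rw [hnz]; exact hrε
      have hconj : z * (starRingEnd ℂ) z = (r ^ 2 : ℂ) := by
        rw [Complex.mul_conj, Complex.normSq_eq_norm_sq, hnz]
        push_cast; ring
      have := h z hzball
      simp only [Φ, sub_zero, smul_eq_mul]
      field_simp
      rw [← hconj]
      linear_combination z * this
    rw [circleIntegral.integral_congr hr.le heq]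
    simp [circleIntegral]
  rw [hzero] at hint
  have hΦ0 : Φ 0 = 0 := by
    have h2 : (2 * (Real.pi : ℂ) * Complex.I) ≠ 0 := Complex.two_pi_I_ne_zero
    have := hint.symm
    rw [smul_eq_mul] at this
    exact (mul_eq_zero.1 this).resolve_left h2
  have : (r ^ 2 : ℂ) * G 0 = 0 := by
    simpa [Φ] using hΦ0
  have hr2 : ((r : ℂ) ^ 2) ≠ 0 :=
    pow_ne_zero 2 (Complex.ofReal_ne_zero.2 hr.ne')
  exact (mul_eq_zero.1 this).resolve_left hr2

variable {H : Type*} [NormedAddCommGroup H] [InnerProductSpace ℂ H]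

/-- if `f` is holomorphic on the open unit ball of a complex Hilbert
space, `τ` is a unit vector, and `⟨f y, y - τ + ‖y‖² τ - ⟨τ, y⟩ y⟩ = 0` for all `y`
in the ball, then `f ≡ 0` on the ball. -/
theorem orthogonality_implies_zero (f : H → H)
    (hf : DifferentiableOn ℂ f (ball (0 : H) 1))
    (τ : H) (hτ : ‖τ‖ = 1)
    (horth : ∀ y ∈ ball (0 : H) 1,
      ip (f y) (y - τ + (‖y‖ ^ 2 : ℂ) • τ - ip τ y • y) = 0) :
    ∀ y ∈ ball (0 : H) 1, f y = 0 := by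
  -- rewrite the orthogonality relation
  have hstar : ∀ y ∈ ball (0 : H) 1,
      (1 - (inner ℂ τ y : ℂ)) * (inner ℂ y (f y) : ℂ)
        = (1 - ((‖y‖ : ℂ)) ^ 2) * (inner ℂ τ (f y) : ℂ) := by
    intro y hy
    have h := horth y hy
    simp only [ip, inner_sub_left, inner_add_left, inner_smul_left, map_pow,
      Complex.conj_ofReal] at h
    rw [inner_conj_symm] at h
    linear_combination h
  have hcast : ∀ x : H, ((‖x‖ : ℂ)) ^ 2 = (inner ℂ x x : ℂ) :=
    fun x => (inner_self_eq_norm_sq_to_K x).symm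
  intro y₀ hy₀
  have hy₀n : ‖y₀‖ < 1 := by simpa using hy₀
  set c : ℂ := inner ℂ τ y₀ with hc
  have hc1 : (1 : ℂ) - c ≠ 0 := by
    intro hcc
    have : c = 1 := by linear_combination -hcc
    have habs : ‖c‖ ≤ ‖τ‖ * ‖y₀‖ := by
      simpa [hc] using norm_inner_le_norm (𝕜 := ℂ) τ y₀
    rw [this, hτ, one_mul] at habs
    simp at habs
    linarith
  -- key fact for every direction w
  have key : ∀ w : H, (1 - c) * (inner ℂ w (f y₀) : ℂ)
      + (inner ℂ w y₀ : ℂ) * (inner ℂ τ (f y₀) : ℂ) = 0 := by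
    intro w
    set ε : ℝ := (1 - ‖y₀‖) / (‖w‖ + 1) with hεdef
    have hεpos : 0 < ε := by
      apply div_pos (by linarith) (by positivity)
    set ℓ : ℂ → H := fun z => y₀ + z • w with hℓ
    have hℓmaps : ∀ z ∈ ball (0 : ℂ) ε, ℓ z ∈ ball (0 : H) 1 := by
      intro z hz
      have hzn : ‖z‖ < ε := by simpa using hz
      simp only [mem_ball, dist_zero_right, hℓ]
      calc ‖y₀ + z • w‖ ≤ ‖y₀‖ + ‖z‖ * ‖w‖ := by
            simpa [norm_smul] using norm_add_le y₀ (z • w)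
        _ ≤ ‖y₀‖ + ‖z‖ * (‖w‖ + 1) := by nlinarith [norm_nonneg z]
        _ < ‖y₀‖ + ε * (‖w‖ + 1) := by
            have : ‖z‖ * (‖w‖ + 1) < ε * (‖w‖ + 1) := by
              apply mul_lt_mul_of_pos_right hzn (by positivity)
            linarith
        _ = 1 := by
            rw [hεdef]; field_simp; ring
    have hℓdiff : Differentiable ℂ ℓ := by
      exact (differentiable_const _).add (differentiable_id.smul_const w)
    have hcomp : DifferentiableOn ℂ (fun z => f (ℓ z)) (ball 0 ε) :=
      hf.comp hℓdiff.differentiableOn hℓmaps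
    have hinner : ∀ v : H, DifferentiableOn ℂ (fun z => (inner ℂ v (f (ℓ z)) : ℂ))
        (ball 0 ε) := fun v =>
      (innerSL ℂ v).differentiable.comp_differentiableOn hcomp
    set A : ℂ → ℂ := fun z => inner ℂ y₀ (f (ℓ z)) with hA
    set B : ℂ → ℂ := fun z => inner ℂ w (f (ℓ z)) with hB
    set C : ℂ → ℂ := fun z => inner ℂ τ (f (ℓ z)) with hC
    set e : ℂ := inner ℂ y₀ w with he
    set e' : ℂ := inner ℂ w y₀ with he'
    set cw : ℂ := inner ℂ τ w with hcw
    set F : ℂ → ℂ := fun z => (1 - (c + z * cw)) * A z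
      - (1 - (‖y₀‖ : ℂ) ^ 2 - z * e) * C z with hF
    set G : ℂ → ℂ := fun z => (1 - (c + z * cw)) * B z
      + (e' + z * (‖w‖ : ℂ) ^ 2) * C z with hG
    have hFd : DifferentiableOn ℂ F (ball 0 ε) := by
      apply DifferentiableOn.sub
      · exact ((differentiableOn_const _).sub ((differentiableOn_const _).add
          (differentiableOn_id.mul (differentiableOn_const _)))).mul (hinner y₀)
      · exact (((differentiableOn_const _).sub
          (differentiableOn_id.mul (differentiableOn_const _)))).mul (hinner τ)
    have hGd : DifferentiableOn ℂ G (ball 0 ε) := by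
      apply DifferentiableOn.add
      · exact ((differentiableOn_const _).sub ((differentiableOn_const _).add
          (differentiableOn_id.mul (differentiableOn_const _)))).mul (hinner w)
      · exact (((differentiableOn_const _).add
          (differentiableOn_id.mul (differentiableOn_const _)))).mul (hinner τ)
    have hrel : ∀ z ∈ ball (0 : ℂ) ε, F z + (starRingEnd ℂ) z * G z = 0 := by
      intro z hz
      have hs := hstar (ℓ z) (hℓmaps z hz)
      have h1 : (inner ℂ τ (ℓ z) : ℂ) = c + z * cw := by
        simp [hℓ, hc, hcw, inner_add_right, inner_smul_right]
      have h2 : (inner ℂ (ℓ z) (f (ℓ z)) : ℂ) = A z + (starRingEnd ℂ) z * B z := by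
        simp [hℓ, hA, hB, inner_add_left, inner_smul_left, mul_comm]
      have h3 : ((‖ℓ z‖ : ℂ)) ^ 2 = (‖y₀‖ : ℂ) ^ 2 + z * e
          + (starRingEnd ℂ) z * e' + (starRingEnd ℂ) z * z * (‖w‖ : ℂ) ^ 2 := by
        rw [hcast (ℓ z)]
        simp only [hℓ, inner_add_left, inner_add_right, inner_smul_left,
          inner_smul_right]
        rw [← hcast y₀, ← hcast w, he, he']
        ring
      rw [h1, h2, h3] at hs
      simp only [hF, hG]
      linear_combination hs
    have hG0 := aux_conj_vanish hεpos hFd hGd hrel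
    have hℓ0 : ℓ 0 = y₀ := by simp [hℓ]
    simp only [hG, hB, hC, hℓ0, zero_mul, add_zero, mul_zero] at hG0
    linear_combination hG0
  -- deduce inner ℂ τ (f y₀) = 0
  have hs0 := hstar y₀ hy₀
  have hky := key y₀
  rw [← hc] at hs0
  rw [← hcast y₀] at hky
  have ht : (inner ℂ τ (f y₀) : ℂ) = 0 := by
    have h1 : (1 - c) * (inner ℂ y₀ (f y₀) : ℂ)
        = (1 - ((‖y₀‖ : ℂ)) ^ 2) * (inner ℂ τ (f y₀) : ℂ) := hs0
    have h2 : (1 - c) * (inner ℂ y₀ (f y₀) : ℂ)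
        + ((‖y₀‖ : ℂ)) ^ 2 * (inner ℂ τ (f y₀) : ℂ) = 0 := hky
    linear_combination h2 - h1
  -- then f y₀ ⟂ everything
  have hall : ∀ w : H, (inner ℂ w (f y₀) : ℂ) = 0 := by
    intro w
    have := key w
    rw [ht] at this
    have h2 : (1 - c) * (inner ℂ w (f y₀) : ℂ) = 0 := by linear_combination this
    exact (mul_eq_zero.1 h2).resolve_left hc1
  have := hall (f y₀)
  rwa [inner_self_eq_zero] at this
end
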